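/- In the multi-period model, suppose x ∈ ℝ_{≥0}^{n×m×T} satisfies the per-period and overall supply constraints with u_i := Σ_t Σ_j v_{ij} x_{ij}^t − d_i > 0 for all i, and λ_j^t ≥ 0, λ_j ≥ 0 satisfy: (a) for all i, j, t, B_i · v_{ij}/u_i ≤ λ_j^t + λ_j, with equality whenever x_{ij}^t > 0; (b) λ_j^t > 0 implies Σ_i x_{ij}^t = s_j^t; and (c) λ_j > 0 implies Σ_t Σ_i x_{ij}^t = s_j. Set p_j^t = λ_j^t + λ_j. Then (x, p) is a market equilibrium in the generalized sense: (i) for every buyer i and every y ∈ ℝ_{≥0}^{m×T} with Σ_t Σ_j v_{ij} y_j^t − d_i > 0 and Σ_t Σ_j p_j^t y_j^t ≤ B_i · (1 + d_i/(Σ_t Σ_j v_{ij} y_j^t − d_i)), we have Σ_t Σ_j v_{ij} y_j^t − d_i ≤ u_i; and (ii) p_j^t > 0 implies Σ_i x_{ij}^t = s_j^t or Σ_t Σ_i x_{ij}^t = s_j. -/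

import Mathlib

open Finset

/-- In the multi-period sum-utility model, a KKT point of the Eisenberg–Gale
program with per-period and overall supply constraints forms, with prices
`p j t = lam j t + mu j`, a market equilibrium in the generalized sense:
(i) every buyer's bundle maximizes utility over the demand-inflated budget
set, and (ii) an item has positive price at time `t` only if it is
supply-constrained at some layer of its supply hierarchy. -/
theorem multi_period_market_equilibrium
    (n m T : ℕ) (v : Fin n → Fin m → ℝ) (B d : Fin n → ℝ)
    (st : Fin m → Fin T → ℝ) (s : Fin m → ℝ)
    (x : Fin n → Fin m → Fin T → ℝ)
    (lam : Fin m → Fin T → ℝ) (mu : Fin m → ℝ)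
    (hv : ∀ i j, 0 ≤ v i j) (hB : ∀ i, 0 < B i) (hd : ∀ i, 0 ≤ d i)
    (hx : ∀ i j t, 0 ≤ x i j t)
    (hsupt : ∀ j t, ∑ i, x i j t ≤ st j t)
    (hsup : ∀ j, ∑ t, ∑ i, x i j t ≤ s j)
    (hlam : ∀ j t, 0 ≤ lam j t) (hmu : ∀ j, 0 ≤ mu j)
    (hu : ∀ i, 0 < (∑ t, ∑ j, v i j * x i j t) - d i)
    (hkkt : ∀ i j t,
      B i * v i j / ((∑ t', ∑ j', v i j' * x i j' t') - d i) ≤ lam j t + mu j)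
    (hcs : ∀ i j t, 0 < x i j t →
      B i * v i j / ((∑ t', ∑ j', v i j' * x i j' t') - d i) = lam j t + mu j)
    (hcs_t : ∀ j t, 0 < lam j t → ∑ i, x i j t = st j t)
    (hcs_o : ∀ j, 0 < mu j → ∑ t, ∑ i, x i j t = s j) :
    (∀ i, ∀ y : Fin m → Fin T → ℝ, (∀ j t, 0 ≤ y j t) →
      0 < (∑ t, ∑ j, v i j * y j t) - d i →
      (∑ t, ∑ j, (lam j t + mu j) * y j t)
        ≤ B i * (1 + d i / ((∑ t, ∑ j, v i j * y j t) - d i)) →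
      (∑ t, ∑ j, v i j * y j t) - d i
        ≤ (∑ t, ∑ j, v i j * x i j t) - d i) ∧
    (∀ j t, 0 < lam j t + mu j →
      (∑ i, x i j t = st j t) ∨ (∑ t', ∑ i, x i j t' = s j)) := by
  constructor
  · intro i y hy hyu hbud
    set u := (∑ t', ∑ j', v i j' * x i j' t') - d i with hud
    have hu' : 0 < u := hu i
    set S := ∑ t, ∑ j, v i j * y j t with hS
    have hSpos : 0 < S := by
      have := hd i; linarith [hyu]
    have h1 : B i * S / u ≤ ∑ t, ∑ j, (lam j t + mu j) * y j t := by
      have : B i * S / u = ∑ t, ∑ j, (B i * v i j / u) * y j t := by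
        rw [hS, Finset.mul_sum, Finset.sum_div]
        refine Finset.sum_congr rfl fun t _ => ?_
        rw [Finset.mul_sum, Finset.sum_div]
        refine Finset.sum_congr rfl fun j _ => ?_
        ring
      rw [this]
      refine Finset.sum_le_sum fun t _ => Finset.sum_le_sum fun j _ => ?_
      exact mul_le_mul_of_nonneg_right (hkkt i j t) (hy j t)
    have h2 : B i * (1 + d i / (S - d i)) = B i * S / (S - d i) := by
      field_simp
      ring
    have h3 : B i * S / u ≤ B i * S / (S - d i) := by
      calc B i * S / u ≤ ∑ t, ∑ j, (lam j t + mu j) * y j t := h1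
        _ ≤ B i * (1 + d i / (S - d i)) := hbud
        _ = B i * S / (S - d i) := h2
    have hBS : 0 < B i * S := mul_pos (hB i) hSpos
    rw [div_le_div_iff₀ hu' hyu] at h3
    have := (mul_le_mul_iff_right₀ hBS).mp (by linarith : B i * S * (S - d i) ≤ B i * S * u)
    linarith
  · intro j t hpt
    rcases lt_or_eq_of_le (hlam j t) with h | h
    · exact Or.inl (hcs_t j t h)
    · refine Or.inr (hcs_o j ?_)
      rcases lt_or_eq_of_le (hmu j) with h' | h'
      · exact h'
      · exfalso; rw [← h, ← h'] at hpt; linarith
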